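/- In a symmetric monoidal closed category, if A is dualizable, then one can choose the counit to be evaluation: there exists η : I → A* ⊗ A such that (A, A*, η, ev_{A,I}) is an adjunction; moreover the second triangle identity follows from the first, i.e., if (ev_{A,I} ⊗ A) ∘ (A ⊗ η) = λ_A⁻¹ ∘ ρ_A then (A* ⊗ ev_{A,I}) ∘ (η ⊗ A*) = ρ_{A*}⁻¹ ∘ λ_{A*} automatically holds. -/

import Mathlib

open CategoryTheory MonoidalCategory MonoidalClosed

variable {C : Type*} [Category C] [MonoidalCategory C] [SymmetricCategory C] [MonoidalClosed C]

/-- Auxiliary: with counit the evaluation, the second triangle identity follows from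
the first, using only the universal property of the internal hom. -/
theorem aux_second_of_first (A : C) (η : 𝟙_ C ⟶ (ihom A).obj (𝟙_ C) ⊗ A)
    (h1 : (A ◁ η) ≫ (α_ A ((ihom A).obj (𝟙_ C)) A).inv ≫ ((ihom.ev A).app (𝟙_ C) ▷ A)
          = (ρ_ A).hom ≫ (λ_ A).inv) :
    ((η ▷ (ihom A).obj (𝟙_ C)) ≫ (α_ ((ihom A).obj (𝟙_ C)) A ((ihom A).obj (𝟙_ C))).hom
            ≫ ((ihom A).obj (𝟙_ C) ◁ (ihom.ev A).app (𝟙_ C))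
          = (λ_ ((ihom A).obj (𝟙_ C))).hom ≫ (ρ_ ((ihom A).obj (𝟙_ C))).inv) := by
  rw [← cancel_mono (ρ_ ((ihom A).obj (𝟙_ C))).hom]
  simp only [Category.assoc, Iso.inv_hom_id, Category.comp_id]
  apply uncurry_injective
  rw [uncurry_eq, uncurry_eq]
  simp only [Functor.id_obj, Functor.comp_obj, curriedTensor_obj_obj]
  simp only [MonoidalCategory.whiskerLeft_comp, Category.assoc]
  rw [whiskerLeft_rightUnitor]
  simp only [Category.assoc]
  rw [← rightUnitor_naturality]
  rw [associator_inv_naturality_right_assoc]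
  rw [whisker_exchange_assoc]
  rw [whisker_assoc_symm]
  have hp : (α_ A (((ihom A).obj (𝟙_ C)) ⊗ A) ((ihom A).obj (𝟙_ C))).hom ≫
      (A ◁ (α_ ((ihom A).obj (𝟙_ C)) A ((ihom A).obj (𝟙_ C))).hom) ≫
      (α_ A ((ihom A).obj (𝟙_ C)) (A ⊗ (ihom A).obj (𝟙_ C))).inv =
      ((α_ A ((ihom A).obj (𝟙_ C)) A).inv ▷ ((ihom A).obj (𝟙_ C))) ≫
      (α_ (A ⊗ (ihom A).obj (𝟙_ C)) A ((ihom A).obj (𝟙_ C))).hom := by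
    coherence
  simp only [Category.assoc]
  rw [reassoc_of% hp]
  rw [← associator_naturality_left_assoc]
  rw [← comp_whiskerRight_assoc, ← comp_whiskerRight_assoc]
  simp only [Category.assoc]
  rw [h1]
  rw [← unitors_equal, leftUnitor_naturality]
  coherence

/-- Auxiliary: transporting the first triangle identity along `curry`. -/
theorem first_triangle_ev (A B : C) (η : 𝟙_ C ⟶ B ⊗ A) (ε : A ⊗ B ⟶ 𝟙_ C)
    (h1 : (A ◁ η) ≫ (α_ A B A).inv ≫ (ε ▷ A) = (ρ_ A).hom ≫ (λ_ A).inv) :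
    (A ◁ (η ≫ (curry ε ▷ A))) ≫ (α_ A ((ihom A).obj (𝟙_ C)) A).inv
        ≫ ((ihom.ev A).app (𝟙_ C) ▷ A) = (ρ_ A).hom ≫ (λ_ A).inv := by
  rw [MonoidalCategory.whiskerLeft_comp, Category.assoc,
    associator_inv_naturality_middle_assoc, ← comp_whiskerRight, ← uncurry_eq,
    uncurry_curry, h1]


/-- in a symmetric monoidal closed category, if `A` is dualizable
then the counit can be chosen to be the evaluation `ev_{A,I} : A ⊗ A* ⟶ I`:
there is `η : I ⟶ A* ⊗ A` making `(A, A*, η, ev_{A,I})` an adjunction.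
Moreover the second triangle identity follows from the first. -/
theorem dualizable_counit_is_evaluation (A : C)
    (h : ∃ (B : C) (η : 𝟙_ C ⟶ B ⊗ A) (ε : A ⊗ B ⟶ 𝟙_ C),
      ((A ◁ η) ≫ (α_ A B A).inv ≫ (ε ▷ A) = (ρ_ A).hom ≫ (λ_ A).inv) ∧
      ((η ▷ B) ≫ (α_ B A B).hom ≫ (B ◁ ε) = (λ_ B).hom ≫ (ρ_ B).inv)) :
    (∃ η : 𝟙_ C ⟶ (ihom A).obj (𝟙_ C) ⊗ A,
      ((A ◁ η) ≫ (α_ A ((ihom A).obj (𝟙_ C)) A).inv ≫ ((ihom.ev A).app (𝟙_ C) ▷ A)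
          = (ρ_ A).hom ≫ (λ_ A).inv) ∧
      ((η ▷ (ihom A).obj (𝟙_ C)) ≫ (α_ ((ihom A).obj (𝟙_ C)) A ((ihom A).obj (𝟙_ C))).hom
            ≫ ((ihom A).obj (𝟙_ C) ◁ (ihom.ev A).app (𝟙_ C))
          = (λ_ ((ihom A).obj (𝟙_ C))).hom ≫ (ρ_ ((ihom A).obj (𝟙_ C))).inv)) ∧
    (∀ η : 𝟙_ C ⟶ (ihom A).obj (𝟙_ C) ⊗ A,
      ((A ◁ η) ≫ (α_ A ((ihom A).obj (𝟙_ C)) A).inv ≫ ((ihom.ev A).app (𝟙_ C) ▷ A)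
          = (ρ_ A).hom ≫ (λ_ A).inv) →
      ((η ▷ (ihom A).obj (𝟙_ C)) ≫ (α_ ((ihom A).obj (𝟙_ C)) A ((ihom A).obj (𝟙_ C))).hom
            ≫ ((ihom A).obj (𝟙_ C) ◁ (ihom.ev A).app (𝟙_ C))
          = (λ_ ((ihom A).obj (𝟙_ C))).hom ≫ (ρ_ ((ihom A).obj (𝟙_ C))).inv)) := by
  constructor
  · obtain ⟨B, η, ε, h1, -⟩ := h
    exact ⟨η ≫ (curry ε ▷ A), first_triangle_ev A B η ε h1,
      aux_second_of_first A _ (first_triangle_ev A B η ε h1)⟩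
  · exact fun η h1 => aux_second_of_first A η h1
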